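/- (Deterministic core of Corollary 2: the oracle barycenter is a local maximum of the rectified Grassmannian objective.) Fix K ≥ 1, orthogonal projection matrices P̃₁,…,P̃_K ∈ ℝ^{p×p}, positive weights n₁,…,n_K, real numbers r₁,…,r_K, a subset ℐ ⊆ {1,…,K}, and τ ∈ ℝ. Let 𝒫 denote the set of orthogonal projection matrices P ∈ ℝ^{p×p} with tr(P) = p₀, and define F(P) := Σ_{k=1}^{K} n_k max{ tr(P̃_k P), r_k − τ }. Suppose P★ ∈ 𝒫 satisfies: (i) Σ_{k∈ℐ} n_k tr(P̃_k P) ≤ Σ_{k∈ℐ} n_k tr(P̃_k P★) for every P ∈ 𝒫; (ii) tr(P̃_k P★) > r_k − τ for every k ∈ ℐ; and (iii) tr(P̃_k P★) < r_k − τ for every k ∉ ℐ. Then P★ is a local maximum of F on 𝒫: there exists ε > 0 such that F(P) ≤ F(P★) for every P ∈ 𝒫 with ‖P − P★‖_F < ε. -/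

import Mathlib

open Matrix

/-- Frobenius norm of a real matrix. -/
noncomputable def frobNorm {m n : ℕ} (A : Matrix (Fin m) (Fin n) ℝ) : ℝ :=
  Real.sqrt (Matrix.trace (Aᵀ * A))

lemma frobNorm_nonneg {m n : ℕ} (A : Matrix (Fin m) (Fin n) ℝ) : 0 ≤ frobNorm A :=
  Real.sqrt_nonneg _

lemma entry_abs_le_frobNorm {m n : ℕ} (D : Matrix (Fin m) (Fin n) ℝ) (i : Fin m) (j : Fin n) :
    |D i j| ≤ frobNorm D := by
  have htr : Matrix.trace (Dᵀ * D) = ∑ a : Fin n, ∑ b : Fin m, (D b a) ^ 2 := by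
    simp [Matrix.trace, Matrix.mul_apply, Matrix.diag, sq]
  have h1 : (D i j) ^ 2 ≤ Matrix.trace (Dᵀ * D) := by
    rw [htr]
    have h2 : (D i j) ^ 2 ≤ ∑ b : Fin m, (D b j) ^ 2 :=
      Finset.single_le_sum (fun b _ => sq_nonneg (D b j)) (Finset.mem_univ i)
    refine le_trans h2 ?_
    exact Finset.single_le_sum (fun a _ => Finset.sum_nonneg fun b _ => sq_nonneg (D b a))
      (Finset.mem_univ j)
  calc |D i j| = Real.sqrt ((D i j) ^ 2) := (Real.sqrt_sq_eq_abs _).symm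
    _ ≤ frobNorm D := Real.sqrt_le_sqrt h1

lemma trace_mul_abs_le {p : ℕ} (A D : Matrix (Fin p) (Fin p) ℝ) :
    |Matrix.trace (A * D)| ≤ (∑ i : Fin p, ∑ j : Fin p, |A i j|) * frobNorm D := by
  have hf := frobNorm_nonneg D
  calc |Matrix.trace (A * D)| = |∑ i : Fin p, ∑ j : Fin p, A i j * D j i| := by
        simp [Matrix.trace, Matrix.mul_apply, Matrix.diag]
    _ ≤ ∑ i : Fin p, |∑ j : Fin p, A i j * D j i| := Finset.abs_sum_le_sum_abs _ _
    _ ≤ ∑ i : Fin p, ∑ j : Fin p, |A i j * D j i| :=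
        Finset.sum_le_sum fun i _ => Finset.abs_sum_le_sum_abs _ _
    _ ≤ ∑ i : Fin p, ∑ j : Fin p, |A i j| * frobNorm D := by
        refine Finset.sum_le_sum fun i _ => Finset.sum_le_sum fun j _ => ?_
        rw [abs_mul]
        exact mul_le_mul_of_nonneg_left (entry_abs_le_frobNorm D j i) (abs_nonneg _)
    _ = (∑ i : Fin p, ∑ j : Fin p, |A i j|) * frobNorm D := by
        rw [Finset.sum_mul]
        exact Finset.sum_congr rfl fun i _ => (Finset.sum_mul _ _ _).symm

/-- Deterministic core of Corollary 2: under separation conditions (ii), (iii) and the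
oracle optimality (i) over the informative set ℐ, the oracle barycenter P★ is a local
maximum of the rectified Grassmannian objective
F(P) = Σ_k n_k max{tr(P̃_k P), r_k − τ} over rank-p₀ orthogonal projections. -/
theorem oracle_local_maximum_rectified {p p₀ K : ℕ} (hK : 1 ≤ K)
    (Ptil : Fin K → Matrix (Fin p) (Fin p) ℝ)
    (hPtilsymm : ∀ k, (Ptil k)ᵀ = Ptil k) (hPtilidem : ∀ k, Ptil k * Ptil k = Ptil k)
    (n : Fin K → ℝ) (hn : ∀ k, 0 < n k)
    (r : Fin K → ℝ) (I : Finset (Fin K)) (τ : ℝ)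
    (Pstar : Matrix (Fin p) (Fin p) ℝ)
    (hPstar : Pstarᵀ = Pstar ∧ Pstar * Pstar = Pstar ∧ Matrix.trace Pstar = (p₀ : ℝ))
    (hOpt : ∀ P : Matrix (Fin p) (Fin p) ℝ, Pᵀ = P → P * P = P →
      Matrix.trace P = (p₀ : ℝ) →
      ∑ k ∈ I, n k * Matrix.trace (Ptil k * P) ≤
        ∑ k ∈ I, n k * Matrix.trace (Ptil k * Pstar))
    (hIn : ∀ k ∈ I, r k - τ < Matrix.trace (Ptil k * Pstar))
    (hOut : ∀ k ∉ I, Matrix.trace (Ptil k * Pstar) < r k - τ) :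
    ∃ ε > 0, ∀ P : Matrix (Fin p) (Fin p) ℝ, Pᵀ = P → P * P = P →
      Matrix.trace P = (p₀ : ℝ) → frobNorm (P - Pstar) < ε →
      ∑ k : Fin K, n k * max (Matrix.trace (Ptil k * P)) (r k - τ) ≤
        ∑ k : Fin K, n k * max (Matrix.trace (Ptil k * Pstar)) (r k - τ) := by
  haveI : Nonempty (Fin K) := ⟨⟨0, hK⟩⟩
  set C : Fin K → ℝ := fun k => (∑ i : Fin p, ∑ j : Fin p, |Ptil k i j|) + 1 with hC
  have hCpos : ∀ k, 0 < C k := fun k => by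
    have h0 : 0 ≤ ∑ i : Fin p, ∑ j : Fin p, |Ptil k i j| :=
      Finset.sum_nonneg fun i _ => Finset.sum_nonneg fun j _ => abs_nonneg _
    have hCk : C k = (∑ i : Fin p, ∑ j : Fin p, |Ptil k i j|) + 1 := rfl
    linarith
  set δ : Fin K → ℝ := fun k => |Matrix.trace (Ptil k * Pstar) - (r k - τ)| with hδ
  have hδpos : ∀ k, 0 < δ k := fun k => by
    by_cases hk : k ∈ I
    · exact abs_pos.mpr (by have := hIn k hk; linarith)
    · exact abs_pos.mpr (by have := hOut k hk; linarith)
  refine ⟨Finset.univ.inf' Finset.univ_nonempty (fun k => δ k / C k), ?_, ?_⟩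
  · rw [gt_iff_lt, Finset.lt_inf'_iff]
    exact fun k _ => div_pos (hδpos k) (hCpos k)
  · intro P hsymm hidem htr hfrob
    have hclose : ∀ k : Fin K,
        |Matrix.trace (Ptil k * P) - Matrix.trace (Ptil k * Pstar)| < δ k := by
      intro k
      have h1 : Matrix.trace (Ptil k * P) - Matrix.trace (Ptil k * Pstar)
          = Matrix.trace (Ptil k * (P - Pstar)) := by
        rw [Matrix.mul_sub, Matrix.trace_sub]
      have h2 := trace_mul_abs_le (Ptil k) (P - Pstar)
      have h3 : (Finset.univ.inf' Finset.univ_nonempty (fun k => δ k / C k)) ≤ δ k / C k :=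
        Finset.inf'_le _ (Finset.mem_univ k)
      have h4 : frobNorm (P - Pstar) < δ k / C k := lt_of_lt_of_le hfrob h3
      have h5 : (∑ i : Fin p, ∑ j : Fin p, |Ptil k i j|) * frobNorm (P - Pstar)
          ≤ C k * frobNorm (P - Pstar) := by
        apply mul_le_mul_of_nonneg_right _ (frobNorm_nonneg _)
        have hCk : C k = (∑ i : Fin p, ∑ j : Fin p, |Ptil k i j|) + 1 := rfl
        linarith
      have h6 : C k * frobNorm (P - Pstar) < C k * (δ k / C k) :=
        mul_lt_mul_of_pos_left h4 (hCpos k)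
      have h7 : C k * (δ k / C k) = δ k := mul_div_cancel₀ _ (ne_of_gt (hCpos k))
      rw [h1]
      calc |Matrix.trace (Ptil k * (P - Pstar))|
          ≤ (∑ i : Fin p, ∑ j : Fin p, |Ptil k i j|) * frobNorm (P - Pstar) := h2
        _ ≤ C k * frobNorm (P - Pstar) := h5
        _ < C k * (δ k / C k) := h6
        _ = δ k := h7
    have hmaxP : ∀ k : Fin K, max (Matrix.trace (Ptil k * P)) (r k - τ)
        = if k ∈ I then Matrix.trace (Ptil k * P) else r k - τ := by
      intro k
      have hk := hclose k
      rw [abs_lt] at hk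
      by_cases h : k ∈ I
      · simp only [h, if_true]
        have hδk : δ k = Matrix.trace (Ptil k * Pstar) - (r k - τ) :=
          abs_of_pos (by have := hIn k h; linarith)
        exact max_eq_left (by rw [hδk] at hk; linarith)
      · simp only [h, if_false]
        have hδk : δ k = -(Matrix.trace (Ptil k * Pstar) - (r k - τ)) :=
          abs_of_neg (by have := hOut k h; linarith)
        exact max_eq_right (le_of_lt (by rw [hδk] at hk; linarith))
    have hmaxS : ∀ k : Fin K, max (Matrix.trace (Ptil k * Pstar)) (r k - τ)
        = if k ∈ I then Matrix.trace (Ptil k * Pstar) else r k - τ := by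
      intro k
      by_cases h : k ∈ I
      · simp only [h, if_true]; exact max_eq_left (le_of_lt (hIn k h))
      · simp only [h, if_false]; exact max_eq_right (le_of_lt (hOut k h))
    have split : ∀ (Q : Matrix (Fin p) (Fin p) ℝ),
        (∑ k : Fin K, n k * (if k ∈ I then Matrix.trace (Ptil k * Q) else r k - τ))
        = (∑ k ∈ I, n k * Matrix.trace (Ptil k * Q)) + ∑ k ∈ Iᶜ, n k * (r k - τ) := by
      intro Q
      rw [← Finset.sum_add_sum_compl I]
      congr 1
      · exact Finset.sum_congr rfl fun k hk => by simp [hk]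
      · exact Finset.sum_congr rfl fun k hk => by
          simp [Finset.mem_compl.mp hk]
    calc ∑ k : Fin K, n k * max (Matrix.trace (Ptil k * P)) (r k - τ)
        = ∑ k : Fin K, n k * (if k ∈ I then Matrix.trace (Ptil k * P) else r k - τ) := by
          exact Finset.sum_congr rfl fun k _ => by rw [hmaxP k]
      _ = (∑ k ∈ I, n k * Matrix.trace (Ptil k * P)) + ∑ k ∈ Iᶜ, n k * (r k - τ) := split P
      _ ≤ (∑ k ∈ I, n k * Matrix.trace (Ptil k * Pstar)) + ∑ k ∈ Iᶜ, n k * (r k - τ) :=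
          add_le_add_left (hOpt P hsymm hidem htr) _
      _ = ∑ k : Fin K, n k * (if k ∈ I then Matrix.trace (Ptil k * Pstar) else r k - τ) :=
          (split Pstar).symm
      _ = ∑ k : Fin K, n k * max (Matrix.trace (Ptil k * Pstar)) (r k - τ) := by
          exact Finset.sum_congr rfl fun k _ => by rw [hmaxS k]
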